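/- arXiv:math/0007206 — 3 statements merged into one kernel-verified Lean document; each statement's English description precedes it below -/
import Mathlib

section
/- Along any differentiable solution of the Euler–Poisson equations of the toy top (i.e. curves ω, r with m′ = ω×m + DL and r′ = ω×r), the quantity n := ⟨m, r⟩ is a first integral: its time derivative vanishes identically, so n is constant. -/
open scoped RealInnerProductSpace

/-- Cross product on `EuclideanSpace ℝ (Fin 3)`. -/
noncomputable def cross3 (x y : EuclideanSpace ℝ (Fin 3)) : EuclideanSpace ℝ (Fin 3) :=
  WithLp.toLp 2 ![x 1 * y 2 - x 2 * y 1, x 2 * y 0 - x 0 * y 2, x 0 * y 1 - x 1 * y 0]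

/-- The vertical unit vector `k = (0,0,1)`. -/
noncomputable def kvec : EuclideanSpace ℝ (Fin 3) := WithLp.toLp 2 ![0, 0, 1]

/-- Along any solution of the Euler–Poisson equations of the toy top, the quantity
`n = ⟨m, r⟩` is a first integral: its derivative vanishes identically, hence it is constant. -/
theorem toyTop_n_first_integral
    (A C p s : ℝ) (hA : 0 < A) (hC : 0 < C) (hp : 0 < p) (hs : 0 < s)
    (ω r : ℝ → EuclideanSpace ℝ (Fin 3))
    (hω : Differentiable ℝ ω) (hr : Differentiable ℝ r)
    (hrnorm : ∀ t, ‖r t‖ = 1)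
    (m DL : ℝ → EuclideanSpace ℝ (Fin 3))
    (hm : ∀ t, m t = A • ω t + ((C - A) * ⟪ω t, r t⟫) • r t
        + (p * s * ⟪cross3 (r t) kvec, ω t⟫) • cross3 (r t) kvec)
    (hDL : ∀ t, DL t = ((C - A) * ⟪ω t, r t⟫) • cross3 (r t) (ω t)
        + (p * s * ⟪cross3 (r t) kvec, ω t⟫) • cross3 (r t) (cross3 kvec (ω t))
        + p • cross3 (r t) kvec)
    (hmdiff : Differentiable ℝ m)
    (heqm : ∀ t, deriv m t = cross3 (ω t) (m t) + DL t)
    (heqr : ∀ t, deriv r t = cross3 (ω t) (r t)) :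
    (∀ t, deriv (fun t => ⟪m t, r t⟫) t = 0) ∧
      ∀ t₁ t₂, ⟪m t₁, r t₁⟫ = ⟪m t₂, r t₂⟫ := by
  have key : ∀ t, deriv (fun t => ⟪m t, r t⟫) t = 0 := by
    intro t
    have h := ((hmdiff t).hasDerivAt.inner ℝ (hr t).hasDerivAt)
    rw [h.deriv, heqm t, heqr t, hDL t]
    simp only [PiLp.inner_apply, RCLike.inner_apply, conj_trivial, Fin.sum_univ_three,
      cross3, kvec, PiLp.toLp_apply, WithLp.ofLp_toLp, PiLp.add_apply, PiLp.smul_apply, smul_eq_mul,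
      Matrix.cons_val_zero, Matrix.cons_val_one, Matrix.head_cons,
      Matrix.cons_val_two, Matrix.tail_cons]
    ring
  exact ⟨key, fun t₁ t₂ => is_const_of_deriv_eq_zero (hmdiff.inner ℝ hr) key t₁ t₂⟩
end

section
/- Reduced equation of motion of the toy top (pointwise form): under the stated definitions, if u² ≠ 1 then (s/2)·(A/(ps) + 1 − u²)·ν² = (1/p)·(1 − u²)·(h − n²/(2C) − p·u) − (1/(2Ap))·(l − n·u)². -/
open scoped RealInnerProductSpace

/-- Reduced equation of motion of the toy top (pointwise form). -/
theorem toyTop_reduced_equation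
    (A C p s : ℝ) (hA : 0 < A) (hC : 0 < C) (hp : 0 < p) (hs : 0 < s)
    (ω r k : EuclideanSpace ℝ (Fin 3)) (hr : ‖r‖ = 1) (hk : ‖k‖ = 1)
    (u n l ν T V h : ℝ)
    (hu : u = ⟪r, k⟫)
    (hn : n = C * ⟪ω, r⟫)
    (hl : l = A * ⟪ω, k⟫ + (C - A) * ⟪ω, r⟫ * u)
    (hν : ν = ⟪ω, cross3 r k⟫)
    (hT : T = A / 2 * ⟪ω, ω⟫ + (C - A) / 2 * ⟪ω, r⟫ ^ 2 + p * s / 2 * ⟪cross3 r k, ω⟫ ^ 2)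
    (hV : V = p * u)
    (hh : h = T + V)
    (hu2 : u ^ 2 ≠ 1) :
    s / 2 * (A / (p * s) + 1 - u ^ 2) * ν ^ 2
      = 1 / p * (1 - u ^ 2) * (h - n ^ 2 / (2 * C) - p * u)
        - 1 / (2 * A * p) * (l - n * u) ^ 2 := by
  have hr' : (⟪r, r⟫ : ℝ) = 1 := by
    rw [real_inner_self_eq_norm_sq, hr]; norm_num
  have hk' : (⟪k, k⟫ : ℝ) = 1 := by
    rw [real_inner_self_eq_norm_sq, hk]; norm_num
  have hsym : (⟪cross3 r k, ω⟫ : ℝ) = ⟪ω, cross3 r k⟫ := real_inner_comm _ _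
  have key : (⟪ω, cross3 r k⟫ : ℝ) ^ 2
      = (1 - ⟪r, k⟫ ^ 2) * ⟪ω, ω⟫ - ⟪ω, r⟫ ^ 2 - ⟪ω, k⟫ ^ 2
        + 2 * ⟪r, k⟫ * ⟪ω, r⟫ * ⟪ω, k⟫ := by
    simp only [cross3, PiLp.inner_apply, RCLike.inner_apply, conj_trivial,
      PiLp.toLp_apply, Fin.sum_univ_three, Matrix.cons_val_zero, Matrix.cons_val_one, Matrix.head_cons,
      Matrix.cons_val_two, Matrix.tail_cons] at hr' hk' ⊢
    linear_combination
      ((k 0 * k 0 + k 1 * k 1 + k 2 * k 2) * (ω 0 * ω 0 + ω 1 * ω 1 + ω 2 * ω 2)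
        - (ω 0 * k 0 + ω 1 * k 1 + ω 2 * k 2) ^ 2) * hr'
      + ((ω 0 * ω 0 + ω 1 * ω 1 + ω 2 * ω 2)
        - (ω 0 * r 0 + ω 1 * r 1 + ω 2 * r 2) ^ 2) * hk'
  rw [hsym] at hT
  subst hu hn hl hν hT hV hh
  rw [key]
  field_simp
  ring
end

section
/- Representation of the angular velocity in the frame (r, k, r×k): under the stated definitions, if u² ≠ 1 then (1 − u²)·ω = (C⁻¹(1 − u²)n − A⁻¹(l − n·u)·u)·r + A⁻¹(l − n·u)·k + ν·(r×k). -/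
open scoped RealInnerProductSpace

/-- Representation of the angular velocity in the frame `(r, k, r×k)`. -/
theorem toyTop_omega_representation
    (A C : ℝ) (hA : 0 < A) (hC : 0 < C)
    (ω r k : EuclideanSpace ℝ (Fin 3)) (hr : ‖r‖ = 1) (hk : ‖k‖ = 1)
    (u n l ν : ℝ)
    (hu : u = ⟪r, k⟫)
    (hn : n = C * ⟪ω, r⟫)
    (hl : l = A * ⟪ω, k⟫ + (C - A) * ⟪ω, r⟫ * u)
    (hν : ν = ⟪ω, cross3 r k⟫)
    (hu2 : u ^ 2 ≠ 1) :
    (1 - u ^ 2) • ω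
      = (C⁻¹ * (1 - u ^ 2) * n - A⁻¹ * (l - n * u) * u) • r
        + (A⁻¹ * (l - n * u)) • k + ν • cross3 r k := by
  have hr2 : ⟪r, r⟫ = 1 := by
    rw [real_inner_self_eq_norm_sq, hr]; norm_num
  have hk2 : ⟪k, k⟫ = 1 := by
    rw [real_inner_self_eq_norm_sq, hk]; norm_num
  have hC' : C⁻¹ * n = ⟪ω, r⟫ := by
    rw [hn]; field_simp
  have hA' : A⁻¹ * (l - n * u) = ⟪ω, k⟫ - ⟪ω, r⟫ * u := by
    rw [hl, hn]; field_simp; ring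
  simp only [PiLp.inner_apply, RCLike.inner_apply, conj_trivial,
    Fin.sum_univ_three] at hr2 hk2 hC' hA' hu hν
  simp only [cross3, PiLp.toLp_apply, Matrix.cons_val_zero, Matrix.cons_val_one, Matrix.head_cons,
    Matrix.cons_val_two, Matrix.tail_cons] at hν
  have h0 : (C⁻¹ * (1 - u ^ 2) * n - A⁻¹ * (l - n * u) * u)
      = (1 - u ^ 2) * (C⁻¹ * n) - (A⁻¹ * (l - n * u)) * u := by ring

  have e0 : (1 - u ^ 2) * ω 0
      = (C⁻¹ * (1 - u ^ 2) * n - A⁻¹ * (l - n * u) * u) * r 0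
        + (A⁻¹ * (l - n * u)) * k 0 + ν * cross3 r k 0 := by
    rw [h0, hC', hA', hν]
    simp only [cross3, PiLp.toLp_apply, Matrix.cons_val_zero, Matrix.cons_val_one, Matrix.head_cons,
      Matrix.cons_val_two, Matrix.tail_cons]
    subst hu
    linear_combination
      ((ω 0 * k 0 + ω 1 * k 1 + ω 2 * k 2) * k 0
        - (k 0 * k 0 + k 1 * k 1 + k 2 * k 2) * ω 0) * hr2
      + ((ω 0 * r 0 + ω 1 * r 1 + ω 2 * r 2) * r 0 - ω 0) * hk2
  have e1 : (1 - u ^ 2) * ω 1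
      = (C⁻¹ * (1 - u ^ 2) * n - A⁻¹ * (l - n * u) * u) * r 1
        + (A⁻¹ * (l - n * u)) * k 1 + ν * cross3 r k 1 := by
    rw [h0, hC', hA', hν]
    simp only [cross3, PiLp.toLp_apply, Matrix.cons_val_zero, Matrix.cons_val_one, Matrix.head_cons,
      Matrix.cons_val_two, Matrix.tail_cons]
    subst hu
    linear_combination
      ((ω 0 * k 0 + ω 1 * k 1 + ω 2 * k 2) * k 1
        - (k 0 * k 0 + k 1 * k 1 + k 2 * k 2) * ω 1) * hr2
      + ((ω 0 * r 0 + ω 1 * r 1 + ω 2 * r 2) * r 1 - ω 1) * hk2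
  have e2 : (1 - u ^ 2) * ω 2
      = (C⁻¹ * (1 - u ^ 2) * n - A⁻¹ * (l - n * u) * u) * r 2
        + (A⁻¹ * (l - n * u)) * k 2 + ν * cross3 r k 2 := by
    rw [h0, hC', hA', hν]
    simp only [cross3, PiLp.toLp_apply, Matrix.cons_val_zero, Matrix.cons_val_one, Matrix.head_cons,
      Matrix.cons_val_two, Matrix.tail_cons]
    subst hu
    linear_combination
      ((ω 0 * k 0 + ω 1 * k 1 + ω 2 * k 2) * k 2
        - (k 0 * k 0 + k 1 * k 1 + k 2 * k 2) * ω 2) * hr2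
      + ((ω 0 * r 0 + ω 1 * r 1 + ω 2 * r 2) * r 2 - ω 2) * hk2
  ext j
  fin_cases j
  · exact e0
  · exact e1
  · exact e2
end
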